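/- For α > 0, the functions u(r) = √α r / sinh(√α r) and f(r) = coth(√α r) − 1/(√α r) satisfy, for all r > 0, the first-order BPS equations u' + √α f u = 0 and √α r f' = (1−u²)/r, and hence the second-order equations u'' = α f² u + u(u²−1)/r² and f'' = −(2/r) f' + (2/r²) f u²; moreover lim_{r→0} u(r)=1, lim_{r→0} f(r)=0, lim_{r→∞} u(r)=0, lim_{r→∞} f(r)=1, and the energy equals I(u,f) = ∫₀^∞ [2 u'² + (1−u²)²/r² + α r² f'² + 2α f² u²] dr = 2√α. -/

import Mathlib

open MeasureTheory Filter Set Topology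

noncomputable section

private lemma nonneg_of_deriv {F F' : ℝ → ℝ} (hd : ∀ x, HasDerivAt F (F' x) x)
    (h0 : F 0 = 0) (hpos : ∀ x, 0 ≤ x → 0 ≤ F' x) {x : ℝ} (hx : 0 ≤ x) : 0 ≤ F x := by
  have hm : MonotoneOn F (Ici 0) := by
    apply monotoneOn_of_deriv_nonneg (convex_Ici 0)
    · exact fun y _ => (hd y).continuousAt.continuousWithinAt
    · exact fun y _ => ((hd y).differentiableAt).differentiableWithinAt
    · intro y hy
      rw [(hd y).deriv]
      exact hpos y (le_of_lt (by simpa using hy))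
  calc (0:ℝ) = F 0 := h0.symm
  _ ≤ F x := hm self_mem_Ici hx hx

private lemma sinh_le_aux {x : ℝ} (hx : 0 ≤ x) : Real.sinh x ≤ x * Real.cosh x := by
  have h := nonneg_of_deriv (F := fun y => y * Real.cosh y - Real.sinh y)
      (F' := fun y => y * Real.sinh y) (fun y => ?_) (by simp) (fun y hy => mul_nonneg hy
      (Real.sinh_nonneg_iff.mpr hy)) hx
  · linarith
  · have h1 := ((hasDerivAt_id y).mul (Real.hasDerivAt_cosh y)).sub (Real.hasDerivAt_sinh y)
    refine h1.congr_deriv ?_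
    simp [id_eq]

private lemma cosh_le_aux {x : ℝ} (hx : 0 ≤ x) :
    x * Real.cosh x - Real.sinh x ≤ x ^ 2 * Real.sinh x := by
  have h := nonneg_of_deriv
      (F := fun y => y ^ 2 * Real.sinh y - (y * Real.cosh y - Real.sinh y))
      (F' := fun y => y * Real.sinh y + y ^ 2 * Real.cosh y) (fun y => ?_) (by simp)
      (fun y hy => add_nonneg (mul_nonneg hy (Real.sinh_nonneg_iff.mpr hy))
        (mul_nonneg (sq_nonneg y) (Real.cosh_pos y).le)) hx
  · linarith
  · have h1 := ((hasDerivAt_pow 2 y).mul (Real.hasDerivAt_sinh y)).sub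
      (((hasDerivAt_id y).mul (Real.hasDerivAt_cosh y)).sub (Real.hasDerivAt_sinh y))
    refine h1.congr_deriv ?_
    simp [id_eq]; ring

/-- The integrand of the BPS (`β = 2`, `γ = 0`) energy functional
`I(u,f) = ∫₀^∞ [2 u'² + (1−u²)²/r² + α r² f'² + 2α f² u²] dr`. -/
def bpsIntegrand (α : ℝ) (u u' f f' : ℝ → ℝ) (r : ℝ) : ℝ :=
  2 * u' r ^ 2 + (1 - u r ^ 2) ^ 2 / r ^ 2
    + α * r ^ 2 * f' r ^ 2 + 2 * α * f r ^ 2 * u r ^ 2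

/-- the Prasad--Sommerfield pair `u(r) = √α r/sinh(√α r)`,
`f(r) = coth(√α r) − 1/(√α r)` solves the first-order BPS equations, hence the
second-order equations, satisfies the boundary conditions, and has energy `2√α`. -/
theorem prasad_sommerfield_solution (α : ℝ) (hα : 0 < α) (u f u' f' : ℝ → ℝ)
    (hu : ∀ r : ℝ, u r = Real.sqrt α * r / Real.sinh (Real.sqrt α * r))
    (hf : ∀ r : ℝ, f r = Real.cosh (Real.sqrt α * r) / Real.sinh (Real.sqrt α * r)
        - 1 / (Real.sqrt α * r))
    (hu' : ∀ r : ℝ, u' r = -(Real.sqrt α * f r * u r))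
    (hf' : ∀ r : ℝ, f' r = (1 - u r ^ 2) / (Real.sqrt α * r ^ 2)) :
    (∀ r : ℝ, 0 < r →
      HasDerivAt u (u' r) r ∧ HasDerivAt f (f' r) r ∧
      u' r + Real.sqrt α * f r * u r = 0 ∧
      Real.sqrt α * r * f' r = (1 - u r ^ 2) / r ∧
      HasDerivAt u' (α * f r ^ 2 * u r + u r * (u r ^ 2 - 1) / r ^ 2) r ∧
      HasDerivAt f' (-(2 / r) * f' r + 2 / r ^ 2 * f r * u r ^ 2) r) ∧
    Tendsto u (𝓝[>] (0 : ℝ)) (𝓝 1) ∧ Tendsto f (𝓝[>] (0 : ℝ)) (𝓝 0) ∧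
    Tendsto u atTop (𝓝 0) ∧ Tendsto f atTop (𝓝 1) ∧
    (∫ r in Ioi (0 : ℝ), bpsIntegrand α u u' f f' r) = 2 * Real.sqrt α := by
  set s := Real.sqrt α with hs
  have hs0 : 0 < s := Real.sqrt_pos.mpr hα
  have hs2 : s ^ 2 = α := Real.sq_sqrt hα.le
  have hue : u = fun r => s * r / Real.sinh (s * r) := funext hu
  have hfe : f = fun r => Real.cosh (s * r) / Real.sinh (s * r) - 1 / (s * r) := funext hf
  have hU : ∀ r : ℝ, 0 < r → HasDerivAt u (u' r) r := by
    intro r hr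
    have hx : 0 < s * r := mul_pos hs0 hr
    have hsh : Real.sinh (s * r) ≠ 0 := (Real.sinh_pos_iff.mpr hx).ne'
    have h2 : HasDerivAt (fun r : ℝ => s * r) s r := by
      simpa using (hasDerivAt_id r).const_mul s
    have h1 : HasDerivAt (fun r : ℝ => Real.sinh (s * r)) (Real.cosh (s * r) * s) r :=
      (Real.hasDerivAt_sinh (s * r)).comp r h2
    have h3 := h2.div h1 hsh
    rw [hue]
    refine h3.congr_deriv ?_
    rw [hu' r, hf r, hu r]
    field_simp
    ring
  have hF : ∀ r : ℝ, 0 < r → HasDerivAt f (f' r) r := by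
    intro r hr
    have hx : 0 < s * r := mul_pos hs0 hr
    have hsh : Real.sinh (s * r) ≠ 0 := (Real.sinh_pos_iff.mpr hx).ne'
    have h2 : HasDerivAt (fun r : ℝ => s * r) s r := by
      simpa using (hasDerivAt_id r).const_mul s
    have h1 : HasDerivAt (fun r : ℝ => Real.sinh (s * r)) (Real.cosh (s * r) * s) r :=
      (Real.hasDerivAt_sinh (s * r)).comp r h2
    have h1' : HasDerivAt (fun r : ℝ => Real.cosh (s * r)) (Real.sinh (s * r) * s) r :=
      (Real.hasDerivAt_cosh (s * r)).comp r h2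
    have h3 := (h1'.div h1 hsh).sub ((hasDerivAt_const r (1:ℝ)).div h2 hx.ne')
    rw [hfe]
    refine h3.congr_deriv ?_
    rw [hf' r, hu r]
    have hc := Real.cosh_sq_sub_sinh_sq (s * r)
    field_simp
    linear_combination (-(s^2 * r^2)) * hc
  have hU2 : ∀ r : ℝ, 0 < r →
      HasDerivAt u' (α * f r ^ 2 * u r + u r * (u r ^ 2 - 1) / r ^ 2) r := by
    intro r hr
    have h2 : HasDerivAt (fun x => -(s * (f x * u x)))
        (-(s * (f' r * u r + f r * u' r))) r := (((hF r hr).mul (hU r hr)).const_mul s).neg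
    have h3 : HasDerivAt u' (-(s * (f' r * u r + f r * u' r))) r :=
      h2.congr_of_eventuallyEq (Filter.Eventually.of_forall fun x => by rw [hu' x]; ring)
    convert h3 using 1
    rw [hf' r, hu' r, ← hs2]
    field_simp
    ring
  have hF2 : ∀ r : ℝ, 0 < r →
      HasDerivAt f' (-(2 / r) * f' r + 2 / r ^ 2 * f r * u r ^ 2) r := by
    intro r hr
    have hnum : HasDerivAt (fun x => 1 - u x ^ 2) (-(2 * u r ^ 1 * u' r)) r := by
      simpa using ((hU r hr).pow 2).const_sub 1
    have hden : HasDerivAt (fun x : ℝ => s * x ^ 2) (s * (2 * r ^ 1)) r := by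
      simpa using (hasDerivAt_pow 2 r).const_mul s
    have h2 := hnum.div hden (by positivity)
    have h3 : HasDerivAt f'
        ((-(2 * u r ^ 1 * u' r) * (s * r ^ 2) - (1 - u r ^ 2) * (s * (2 * r ^ 1))) /
          (s * r ^ 2) ^ 2) r :=
      h2.congr_of_eventuallyEq (Filter.Eventually.of_forall fun x => hf' x)
    convert h3 using 1
    rw [hu' r, hf' r]
    field_simp
    ring
  -- limit of u at 0+
  have hslope : Tendsto (fun x : ℝ => Real.sinh x / x) (𝓝[≠] 0) (𝓝 1) := by
    have h := (Real.hasDerivAt_sinh 0)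
    rw [hasDerivAt_iff_tendsto_slope] at h
    rw [Real.cosh_zero] at h
    refine h.congr fun x => ?_
    simp [slope_def_field, Real.sinh_zero, neg_div_neg_eq]
  have hmap0 : Tendsto (fun r : ℝ => s * r) (𝓝[>] (0:ℝ)) (𝓝[≠] (0:ℝ)) := by
    apply tendsto_nhdsWithin_of_tendsto_nhds_of_eventually_within
    · have : Tendsto (fun r : ℝ => s * r) (𝓝 0) (𝓝 (s * 0)) :=
        (continuous_const.mul continuous_id).tendsto 0
      simpa using this.mono_left nhdsWithin_le_nhds
    · filter_upwards [self_mem_nhdsWithin] with r hr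
      exact (mul_pos hs0 hr).ne'
  have hu0 : Tendsto u (𝓝[>] (0:ℝ)) (𝓝 1) := by
    have h := (hslope.comp hmap0).inv₀ one_ne_zero
    rw [inv_one] at h
    refine h.congr fun r => ?_
    simp only [Function.comp_apply]
    rw [hu r, inv_div]
  -- limit of f at 0+
  have hf0 : Tendsto f (𝓝[>] (0:ℝ)) (𝓝 0) := by
    have hbound : ∀ r : ℝ, 0 < r → 0 ≤ f r ∧ f r ≤ s * r := by
      intro r hr
      set x := s * r with hxd
      have hx : 0 < x := mul_pos hs0 hr
      have hsh : 0 < Real.sinh x := Real.sinh_pos_iff.mpr hx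
      constructor
      · rw [hf r, sub_nonneg, div_le_div_iff₀ hx hsh]
        have := sinh_le_aux hx.le
        nlinarith
      · rw [hf r, div_sub_div _ _ hsh.ne' hx.ne', div_le_iff₀ (by positivity)]
        have := cosh_le_aux hx.le
        nlinarith
    have hup : Tendsto (fun r : ℝ => s * r) (𝓝[>] (0:ℝ)) (𝓝 0) := by
      have : Tendsto (fun r : ℝ => s * r) (𝓝 0) (𝓝 (s * 0)) :=
        (continuous_const.mul continuous_id).tendsto 0
      simpa using this.mono_left nhdsWithin_le_nhds
    refine tendsto_of_tendsto_of_tendsto_of_le_of_le' tendsto_const_nhds hup ?_ ?_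
    · filter_upwards [self_mem_nhdsWithin] with r hr using (hbound r hr).1
    · filter_upwards [self_mem_nhdsWithin] with r hr using (hbound r hr).2
  -- limit of u at infinity
  have hstop : Tendsto (fun r : ℝ => s * r) atTop atTop :=
    Tendsto.const_mul_atTop hs0 tendsto_id
  have hutop : Tendsto u atTop (𝓝 0) := by
    have hexp : Tendsto (fun r : ℝ => 4 * ((s * r) * Real.exp (-(s * r)))) atTop (𝓝 0) := by
      have h1 := (Real.tendsto_pow_mul_exp_neg_atTop_nhds_zero 1).comp hstop
      have h2 := h1.const_mul (4:ℝ)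
      simpa using h2
    refine tendsto_of_tendsto_of_tendsto_of_le_of_le' tendsto_const_nhds hexp ?_ ?_
    · filter_upwards [eventually_gt_atTop 0] with r hr
      have hx : 0 < s * r := mul_pos hs0 hr
      rw [hu r]
      positivity
    · filter_upwards [hstop.eventually (eventually_ge_atTop 1)] with r hr
      set x := s * r with hxd
      have hx : (0:ℝ) < x := lt_of_lt_of_le one_pos hr
      have hsh : 0 < Real.sinh x := Real.sinh_pos_iff.mpr hx
      rw [hu r, div_le_iff₀ hsh]
      have hee : Real.exp (-x) * Real.exp x = 1 := by
        rw [← Real.exp_add]; simp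
      have ha : (2:ℝ) ≤ Real.exp x := le_trans (by linarith) (Real.add_one_le_exp x)
      have hb : 0 < Real.exp (-x) := Real.exp_pos _
      have h2b : 2 * Real.exp (-x) ≤ 1 := by nlinarith
      have hbsq : Real.exp (-x) ^ 2 ≤ 1 / 4 := by nlinarith
      rw [Real.sinh_eq]
      have hgoal : x ≤ 4 * (x * Real.exp (-x)) * ((Real.exp x - Real.exp (-x)) / 2) := by
        nlinarith [mul_nonneg hx.le (sq_nonneg (Real.exp (-x)))]
      calc s * r = x := hxd.symm
        _ ≤ _ := hgoal
        _ = 4 * (s * r * Real.exp (-(s * r))) * ((Real.exp (s*r) - Real.exp (-(s*r))) / 2) := by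
            rw [hxd]
  -- limit of f at infinity
  have hftop : Tendsto f atTop (𝓝 1) := by
    have hcoth : Tendsto (fun r : ℝ => Real.cosh (s * r) / Real.sinh (s * r)) atTop (𝓝 1) := by
      have hexp : Tendsto (fun r : ℝ => 1 + Real.exp (-(s * r))) atTop (𝓝 1) := by
        have h1 : Tendsto (fun r : ℝ => -(s * r)) atTop atBot :=
          tendsto_neg_atTop_atBot.comp hstop
        have := Real.tendsto_exp_atBot.comp h1
        simpa using tendsto_const_nhds.add this
      refine tendsto_of_tendsto_of_tendsto_of_le_of_le' tendsto_const_nhds hexp ?_ ?_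
      · filter_upwards [hstop.eventually (eventually_ge_atTop 1)] with r hr
        set x := s * r
        have hx : (0:ℝ) < x := lt_of_lt_of_le one_pos hr
        have hsh : 0 < Real.sinh x := Real.sinh_pos_iff.mpr hx
        rw [le_div_iff₀ hsh, one_mul]
        rw [Real.sinh_eq, Real.cosh_eq]
        have := Real.exp_pos (-x)
        linarith
      · filter_upwards [hstop.eventually (eventually_ge_atTop 1)] with r hr
        set x := s * r
        have hx : (0:ℝ) < x := lt_of_lt_of_le one_pos hr
        have hsh : 0 < Real.sinh x := Real.sinh_pos_iff.mpr hx
        have hxs : x ≤ Real.sinh x := (Real.self_lt_sinh_iff.mpr hx).le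
        rw [div_le_iff₀ hsh]
        have key : Real.cosh x - Real.sinh x = Real.exp (-x) := by
          rw [Real.sinh_eq, Real.cosh_eq]; ring
        nlinarith [Real.exp_pos (-x), key, hxs, hr]
    have hinv : Tendsto (fun r : ℝ => 1 / (s * r)) atTop (𝓝 0) := by
      have := tendsto_inv_atTop_zero.comp hstop
      refine this.congr fun r => ?_
      simp [Function.comp, one_div]
    have := hcoth.sub hinv
    rw [sub_zero] at this
    refine this.congr fun r => (hf r).symm
  -- the energy integral
  set g := fun r : ℝ => 2 * s * (f r * (1 - u r ^ 2)) with hgdef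
  have hg0 : g 0 = 0 := by
    simp [hgdef, hf 0]
  have hgd : ∀ r ∈ Ioi (0:ℝ), HasDerivAt g (bpsIntegrand α u u' f f' r) r := by
    intro r hr
    rw [mem_Ioi] at hr
    have hnum : HasDerivAt (fun x => 1 - u x ^ 2) (-(2 * u r ^ 1 * u' r)) r := by
      simpa using ((hU r hr).pow 2).const_sub 1
    have h2 := ((hF r hr).mul hnum).const_mul (2 * s)
    refine h2.congr_deriv ?_
    rw [bpsIntegrand, hu' r, hf' r, ← hs2]
    field_simp
    ring
  have hgtop : Tendsto g atTop (𝓝 (2 * s)) := by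
    have h := Tendsto.const_mul (2 * s) (hftop.mul (Tendsto.const_sub 1 (hutop.pow 2)))
    simpa using h
  have hgcont : ContinuousWithinAt g (Ici 0) 0 := by
    have h1 : Tendsto g (𝓝[>] (0:ℝ)) (𝓝 0) := by
      have h := Tendsto.const_mul (2 * s) (hf0.mul (Tendsto.const_sub 1 (hu0.pow 2)))
      simpa using h
    unfold ContinuousWithinAt
    rw [hg0, ← Ioi_insert, nhdsWithin_insert, tendsto_sup]
    exact ⟨by simpa [hg0] using tendsto_pure_nhds g 0, h1⟩
  have hnonneg : ∀ r ∈ Ioi (0:ℝ), 0 ≤ bpsIntegrand α u u' f f' r := by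
    intro r hr
    rw [bpsIntegrand]
    have h1 : (0:ℝ) ≤ 2 * u' r ^ 2 := by positivity
    have h2 : (0:ℝ) ≤ (1 - u r ^ 2) ^ 2 / r ^ 2 := by positivity
    have h3 : (0:ℝ) ≤ α * r ^ 2 * f' r ^ 2 :=
      mul_nonneg (mul_nonneg hα.le (sq_nonneg r)) (sq_nonneg _)
    have h4 : (0:ℝ) ≤ 2 * α * f r ^ 2 * u r ^ 2 :=
      mul_nonneg (mul_nonneg (mul_nonneg (by norm_num) hα.le) (sq_nonneg _)) (sq_nonneg _)
    linarith
  have hint := integral_Ioi_of_hasDerivAt_of_nonneg hgcont hgd hnonneg hgtop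
  rw [hg0, sub_zero] at hint
  refine ⟨fun r hr => ⟨hU r hr, hF r hr, ?_, ?_, hU2 r hr, hF2 r hr⟩, hu0, hf0, hutop, hftop, ?_⟩
  · rw [hu' r]; ring
  · rw [hf' r]; field_simp [hr.ne', hs0.ne']
  · exact hint
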